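/- The matrix P_{S,R} is idempotent: P_{S,R}·P_{S,R} = P_{S,R}. -/
import Mathlib


open Matrix

theorem aux_ZZtZ {N q : ℕ} (Z : Matrix (Fin q) (Fin N) ℝ)
    (hZ1 : (Zᵀ * Z) * (Zᵀ * Z) = Zᵀ * Z)
    (hZ2 : (Z * Zᵀ) * (Z * Zᵀ) = Z * Zᵀ) : Z * Zᵀ * Z = Z := by
  have h : (Z * Zᵀ * Z - Z)ᴴ * (Z * Zᵀ * Z - Z) = 0 := by
    have hct : (Z * Zᵀ * Z - Z)ᴴ = Zᵀ * (Z * Zᵀ) - Zᵀ := by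
      simp [conjTranspose_sub, conjTranspose_mul, Matrix.mul_assoc]
    rw [hct, Matrix.sub_mul, Matrix.mul_sub, Matrix.mul_sub]
    have a1 : Zᵀ * (Z * Zᵀ) * (Z * Zᵀ * Z) = Zᵀ * Z := by
      calc Zᵀ * (Z * Zᵀ) * (Z * Zᵀ * Z) = Zᵀ * ((Z * Zᵀ) * (Z * Zᵀ)) * Z := by
            simp only [Matrix.mul_assoc]
        _ = Zᵀ * (Z * Zᵀ) * Z := by rw [hZ2]
        _ = (Zᵀ * Z) * (Zᵀ * Z) := by simp only [Matrix.mul_assoc]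
        _ = Zᵀ * Z := hZ1
    have a2 : Zᵀ * (Z * Zᵀ) * Z = Zᵀ * Z := by
      calc Zᵀ * (Z * Zᵀ) * Z = (Zᵀ * Z) * (Zᵀ * Z) := by simp only [Matrix.mul_assoc]
        _ = Zᵀ * Z := hZ1
    have a3 : Zᵀ * (Z * Zᵀ * Z) = Zᵀ * Z := by
      calc Zᵀ * (Z * Zᵀ * Z) = (Zᵀ * Z) * (Zᵀ * Z) := by simp only [Matrix.mul_assoc]
        _ = Zᵀ * Z := hZ1
    rw [a1, a2, a3]
    simp
  exact sub_eq_zero.mp (conjTranspose_mul_self_eq_zero.mp h)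

/-- The oblique projection `P_{S,R} = Zᵀ·Λ_{S,R}⁻¹·Z·(I − A_R)`
is idempotent: `P_{S,R}·P_{S,R} = P_{S,R}`. -/
theorem oblique_projection_idempotent
    {N q : ℕ} (hN : 0 < N) (hq : 0 < q)
    (S : Matrix (Fin N) (Fin N) ℝ) (hS : S.PosSemidef)
    (R : ℝ) (hR : 0 < R)
    (Z : Matrix (Fin q) (Fin N) ℝ)
    (hZ1 : (Zᵀ * Z) * (Zᵀ * Z) = Zᵀ * Z)
    (hZ2 : (Z * Zᵀ) * (Z * Zᵀ) = Z * Zᵀ)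
    (hSR : (S + R • (1 : Matrix (Fin N) (Fin N) ℝ)).PosDef)
    (A : Matrix (Fin N) (Fin N) ℝ)
    (hA : A = R • (S + R • (1 : Matrix (Fin N) (Fin N) ℝ))⁻¹)
    (Λ : Matrix (Fin q) (Fin q) ℝ)
    (hΛ : Λ = (1 : Matrix (Fin q) (Fin q) ℝ) - Z * A * Zᵀ)
    (hΛunit : IsUnit Λ)
    (P : Matrix (Fin N) (Fin N) ℝ)
    (hP : P = Zᵀ * Λ⁻¹ * Z * ((1 : Matrix (Fin N) (Fin N) ℝ) - A)) :
    P * P = P := by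
  have hZZtZ : Z * Zᵀ * Z = Z := aux_ZZtZ Z hZ1 hZ2
  have hZtZZt : Zᵀ * (Z * Zᵀ) = Zᵀ := by
    have := congrArg Matrix.transpose hZZtZ
    simpa [Matrix.transpose_mul, Matrix.mul_assoc] using this
  have hΛi : Λ⁻¹ * Λ = 1 :=
    Matrix.nonsing_inv_mul Λ ((Matrix.isUnit_iff_isUnit_det Λ).mp hΛunit)
  have f0 : Zᵀ * ((1 : Matrix (Fin q) (Fin q) ℝ) - Z * Zᵀ) = 0 := by
    rw [Matrix.mul_sub, Matrix.mul_one, hZtZZt, sub_self]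
  have key2 : Λ * ((1 : Matrix (Fin q) (Fin q) ℝ) - Z * Zᵀ) = 1 - Z * Zᵀ := by
    rw [hΛ, Matrix.sub_mul, Matrix.one_mul]
    have : Z * A * Zᵀ * ((1 : Matrix (Fin q) (Fin q) ℝ) - Z * Zᵀ) = 0 := by
      rw [Matrix.mul_assoc, f0, Matrix.mul_zero]
    rw [this, sub_zero]
  have finv : Λ⁻¹ * ((1 : Matrix (Fin q) (Fin q) ℝ) - Z * Zᵀ) = 1 - Z * Zᵀ := by
    calc Λ⁻¹ * ((1 : Matrix (Fin q) (Fin q) ℝ) - Z * Zᵀ)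
        = Λ⁻¹ * (Λ * ((1 : Matrix (Fin q) (Fin q) ℝ) - Z * Zᵀ)) := by rw [key2]
      _ = (Λ⁻¹ * Λ) * ((1 : Matrix (Fin q) (Fin q) ℝ) - Z * Zᵀ) := by
            rw [Matrix.mul_assoc]
      _ = 1 - Z * Zᵀ := by rw [hΛi, Matrix.one_mul]
  have hB : Z * ((1 : Matrix (Fin N) (Fin N) ℝ) - A) * Zᵀ = Λ - (1 - Z * Zᵀ) := by
    rw [hΛ, Matrix.mul_sub, Matrix.mul_one, Matrix.sub_mul]
    abel
  have core : Zᵀ * Λ⁻¹ * (Z * ((1 : Matrix (Fin N) (Fin N) ℝ) - A) * Zᵀ) * Λ⁻¹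
      = Zᵀ * Λ⁻¹ := by
    rw [hB, Matrix.mul_sub, Matrix.sub_mul]
    have t1 : Zᵀ * Λ⁻¹ * Λ = Zᵀ := by rw [Matrix.mul_assoc, hΛi, Matrix.mul_one]
    have t2 : Zᵀ * Λ⁻¹ * ((1 : Matrix (Fin q) (Fin q) ℝ) - Z * Zᵀ) = 0 := by
      rw [Matrix.mul_assoc, finv, f0]
    rw [t1, t2, Matrix.zero_mul, sub_zero]
  calc P * P
      = (Zᵀ * Λ⁻¹ * (Z * ((1 : Matrix (Fin N) (Fin N) ℝ) - A) * Zᵀ) * Λ⁻¹)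
        * (Z * ((1 : Matrix (Fin N) (Fin N) ℝ) - A)) := by
        rw [hP]; simp only [Matrix.mul_assoc]
    _ = (Zᵀ * Λ⁻¹) * (Z * ((1 : Matrix (Fin N) (Fin N) ℝ) - A)) := by rw [core]
    _ = P := by rw [hP]; simp only [Matrix.mul_assoc]
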